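/- arXiv:2512.06238 — 4 statements merged into one kernel-verified Lean document; each statement's English description precedes it below -/
import Mathlib

section
/- Let A and B be n×n positive definite real matrices. Then |log det(A) - log det(B)| ≤ n · max(‖A⁻¹‖₂, ‖B⁻¹‖₂) · ‖A - B‖₂. -/
open Matrix

/-- Spectral (ℓ²-operator) norm of a real matrix. -/
noncomputable def specNorm {m n : Type*} [Fintype m] [Fintype n] [DecidableEq n]
    (A : Matrix m n ℝ) : ℝ :=
  ‖LinearMap.toContinuousLinearMap (Matrix.toEuclideanLin A)‖

open scoped Matrix.Norms.L2Operator MatrixOrder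

lemma specNorm_eq {n : Type*} [Fintype n] [DecidableEq n] (A : Matrix n n ℝ) :
    specNorm A = ‖A‖ := rfl

lemma trace_eq_sum_eig {n : Type*} [Fintype n] [DecidableEq n] {M : Matrix n n ℝ}
    (hM : M.IsHermitian) : M.trace = ∑ i, hM.eigenvalues i := by
  conv_lhs => rw [hM.spectral_theorem]
  rw [Unitary.conjStarAlgAut_apply, Matrix.trace_mul_cycle, Matrix.mem_unitaryGroup_iff'.mp hM.eigenvectorUnitary.2, one_mul,
    Matrix.trace_diagonal]
  simp

lemma eig_abs_le {n : Type*} [Fintype n] [DecidableEq n] {M : Matrix n n ℝ}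
    (hM : M.IsHermitian) (i : n) : |hM.eigenvalues i| ≤ ‖M‖ := by
  have hv : ‖hM.eigenvectorBasis i‖ = 1 := hM.eigenvectorBasis.orthonormal.1 i
  calc |hM.eigenvalues i|
      = ‖hM.eigenvalues i • hM.eigenvectorBasis i‖ := by
        rw [norm_smul, hv, mul_one, Real.norm_eq_abs]
    _ = ‖(EuclideanSpace.equiv n ℝ).symm (M *ᵥ hM.eigenvectorBasis i)‖ := by
        congr 1
        ext j
        have := congr_fun (hM.mulVec_eigenvectorBasis i) j
        simpa using this.symm
    _ ≤ ‖M‖ * ‖hM.eigenvectorBasis i‖ := M.l2_opNorm_mulVec _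
    _ = ‖M‖ := by rw [hv, mul_one]

lemma trace_abs_le {n : ℕ} {M : Matrix (Fin n) (Fin n) ℝ} (hM : M.IsHermitian) :
    |M.trace| ≤ (n : ℝ) * ‖M‖ := by
  rw [trace_eq_sum_eig hM]
  calc |∑ i, hM.eigenvalues i| ≤ ∑ i, |hM.eigenvalues i| := Finset.abs_sum_le_sum_abs _ _
    _ ≤ ∑ _i : Fin n, ‖M‖ := Finset.sum_le_sum fun i _ => eig_abs_le hM i
    _ = (n : ℝ) * ‖M‖ := by simp [mul_comm]

lemma logdet_le {n : ℕ} {C : Matrix (Fin n) (Fin n) ℝ} (hC : C.PosSemidef)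
    (hdet : 0 < C.det) : Real.log C.det ≤ C.trace - n := by
  have hprod : C.det = ∏ i, hC.1.eigenvalues i := by
    simpa using hC.1.det_eq_prod_eigenvalues
  have heig : ∀ i, 0 < hC.1.eigenvalues i := by
    intro i
    rcases (hC.eigenvalues_nonneg i).lt_or_eq with h | h
    · exact h
    · exfalso
      rw [hprod, Finset.prod_eq_zero (Finset.mem_univ i) h.symm] at hdet
      exact lt_irrefl 0 hdet
  rw [hprod, Real.log_prod (fun i _ => (heig i).ne'), trace_eq_sum_eig hC.1]
  have : (n : ℝ) = ∑ _i : Fin n, (1 : ℝ) := by simp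
  rw [this, ← Finset.sum_sub_distrib]
  exact Finset.sum_le_sum fun i _ => Real.log_le_sub_one_of_pos (heig i)

lemma key {n : ℕ} (A B : Matrix (Fin n) (Fin n) ℝ) (hA : A.PosDef) (hB : B.PosDef) :
    Real.log A.det - Real.log B.det ≤ (n : ℝ) * ‖B⁻¹‖ * ‖A - B‖ := by
  have hBi : (B⁻¹).PosDef := hB.inv
  set S := CFC.sqrt (B⁻¹) with hSdef
  have hSpsd : S.PosSemidef := (CFC.sqrt_nonneg _).posSemidef
  have hSH : Sᴴ = S := hSpsd.1
  have hSS : S * S = B⁻¹ := CFC.sqrt_mul_sqrt_self _ hBi.posSemidef.nonneg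
  -- determinant of S
  have hdS2 : S.det * S.det = (B.det)⁻¹ := by
    rw [← Matrix.det_mul, hSS, Matrix.det_nonsing_inv, Ring.inverse_eq_inv]
  have hdS_nonneg : 0 ≤ S.det := by
    have := hSpsd.1.det_eq_prod_eigenvalues
    simp only [RCLike.ofReal_real_eq_id, id] at this
    rw [this]
    exact Finset.prod_nonneg fun i _ => hSpsd.eigenvalues_nonneg i
  have hdS_pos : 0 < S.det := by
    rcases hdS_nonneg.lt_or_eq with h | h
    · exact h
    · exfalso
      have : (B.det)⁻¹ = 0 := by rw [← hdS2, ← h, mul_zero]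
      exact (inv_pos.mpr hB.det_pos).ne' this
  -- C = S * A * S
  have hC : (S * A * S).PosSemidef := by
    have := hA.posSemidef.mul_mul_conjTranspose_same S
    rwa [hSH] at this
  have hdetC : (S * A * S).det = A.det * (B.det)⁻¹ := by
    rw [Matrix.det_mul, Matrix.det_mul, mul_comm S.det A.det, mul_assoc, hdS2]
  have hdetC_pos : 0 < (S * A * S).det := by
    rw [hdetC]; exact mul_pos hA.det_pos (inv_pos.mpr hB.det_pos)
  have hlogC : Real.log (S * A * S).det = Real.log A.det - Real.log B.det := by
    rw [hdetC, Real.log_mul hA.det_pos.ne' (inv_pos.mpr hB.det_pos).ne', Real.log_inv, sub_eq_add_neg]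
  -- trace identity
  have htrB : (S * B * S).trace = (n : ℝ) := by
    rw [Matrix.trace_mul_cycle, hSS, Matrix.nonsing_inv_mul B hB.det_pos.ne'.isUnit,
      Matrix.trace_one]
    simp
  have hsub : S * A * S - S * B * S = S * (A - B) * S := by rw [mul_sub, sub_mul]
  have hH : (S * (A - B) * S).IsHermitian := by
    have := Matrix.isHermitian_mul_mul_conjTranspose S (hA.1.sub hB.1)
    rwa [hSH] at this
  have hnS : ‖S‖ * ‖S‖ = ‖B⁻¹‖ := by
    have := CStarRing.norm_star_mul_self (x := S)
    rw [Matrix.star_eq_conjTranspose, hSH, hSS] at this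
    exact this.symm
  have hnorm : ‖S * (A - B) * S‖ ≤ ‖B⁻¹‖ * ‖A - B‖ := by
    calc ‖S * (A - B) * S‖ ≤ ‖S * (A - B)‖ * ‖S‖ := Matrix.l2_opNorm_mul _ _
      _ ≤ ‖S‖ * ‖A - B‖ * ‖S‖ :=
        mul_le_mul_of_nonneg_right (Matrix.l2_opNorm_mul _ _) (norm_nonneg S)
      _ = ‖B⁻¹‖ * ‖A - B‖ := by rw [mul_right_comm, hnS]
  calc Real.log A.det - Real.log B.det = Real.log (S * A * S).det := hlogC.symm
    _ ≤ (S * A * S).trace - n := logdet_le hC hdetC_pos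
    _ = (S * (A - B) * S).trace := by rw [← htrB, ← Matrix.trace_sub, hsub]
    _ ≤ |(S * (A - B) * S).trace| := le_abs_self _
    _ ≤ (n : ℝ) * ‖S * (A - B) * S‖ := trace_abs_le hH
    _ ≤ (n : ℝ) * (‖B⁻¹‖ * ‖A - B‖) := mul_le_mul_of_nonneg_left hnorm n.cast_nonneg
    _ = (n : ℝ) * ‖B⁻¹‖ * ‖A - B‖ := (mul_assoc _ _ _).symm

theorem stmt2 {n : ℕ} (A B : Matrix (Fin n) (Fin n) ℝ)
    (hA : A.PosDef) (hB : B.PosDef) :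
    |Real.log A.det - Real.log B.det| ≤
      (n : ℝ) * max (specNorm A⁻¹) (specNorm B⁻¹) * specNorm (A - B) := by
  simp only [specNorm_eq]
  have h1 := key A B hA hB
  have h2 := key B A hB hA
  rw [norm_sub_rev] at h2
  rw [abs_sub_le_iff]
  constructor
  · exact h1.trans (mul_le_mul_of_nonneg_right
      (mul_le_mul_of_nonneg_left (le_max_right _ _) n.cast_nonneg) (norm_nonneg _))
  · exact h2.trans (mul_le_mul_of_nonneg_right
      (mul_le_mul_of_nonneg_left (le_max_left _ _) n.cast_nonneg) (norm_nonneg _))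
end

section
/- The function g(A) = ‖A⁻¹‖₂ is convex on the set of n×n positive definite real matrices: for positive definite A, B and t ∈ [0,1], ‖((1-t)A + tB)⁻¹‖₂ ≤ (1-t)‖A⁻¹‖₂ + t‖B⁻¹‖₂. -/
open Matrix

open scoped RealInnerProductSpace

namespace SpecAux

variable {n : ℕ}

lemma inner_toEuclideanLin (M : Matrix (Fin n) (Fin n) ℝ) (u v : EuclideanSpace ℝ (Fin n)) :
    ⟪u, Matrix.toEuclideanLin M v⟫
      = (WithLp.equiv 2 (Fin n → ℝ) u) ⬝ᵥ (M *ᵥ (WithLp.equiv 2 (Fin n → ℝ) v)) := by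
  simp [PiLp.inner_apply, Matrix.toEuclideanLin_apply, dotProduct, RCLike.inner_apply,
    mul_comm]

lemma inner_nonneg {S : Matrix (Fin n) (Fin n) ℝ} (hS : S.PosSemidef)
    (v : EuclideanSpace ℝ (Fin n)) : 0 ≤ ⟪v, Matrix.toEuclideanLin S v⟫ := by
  rw [inner_toEuclideanLin]
  simpa using hS.dotProduct_mulVec_nonneg (WithLp.equiv 2 (Fin n → ℝ) v)

/-- Cauchy–Schwarz for the PSD bilinear form of a PSD matrix. -/
lemma cs {S : Matrix (Fin n) (Fin n) ℝ} (hS : S.PosSemidef) (p q : EuclideanSpace ℝ (Fin n)) :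
    ⟪p, Matrix.toEuclideanLin S q⟫ ^ 2
      ≤ ⟪p, Matrix.toEuclideanLin S p⟫ * ⟪q, Matrix.toEuclideanLin S q⟫ := by
  have hsym := (Matrix.isHermitian_iff_isSymmetric).mp hS.1
  have hsym' : ⟪q, Matrix.toEuclideanLin S p⟫ = ⟪p, Matrix.toEuclideanLin S q⟫ := by
    rw [← hsym q p, real_inner_comm]
  have h := discrim_le_zero (a := ⟪q, Matrix.toEuclideanLin S q⟫)
      (b := 2 * ⟪p, Matrix.toEuclideanLin S q⟫)
      (c := ⟪p, Matrix.toEuclideanLin S p⟫) ?_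
  · rw [discrim] at h; nlinarith [h]
  · intro r
    have h0 := inner_nonneg hS (p + r • q)
    have expand : ⟪p + r • q, Matrix.toEuclideanLin S (p + r • q)⟫
        = ⟪q, Matrix.toEuclideanLin S q⟫ * (r * r)
          + 2 * ⟪p, Matrix.toEuclideanLin S q⟫ * r
          + ⟪p, Matrix.toEuclideanLin S p⟫ := by
      rw [map_add, _root_.map_smul]
      rw [inner_add_left, inner_add_right, inner_add_right]
      rw [real_inner_smul_left, real_inner_smul_left, inner_smul_right, inner_smul_right]
      rw [hsym']
      ring
    rw [expand] at h0
    exact h0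

/-- If `c • 1 ≼ M` (in inner product form) then `‖M⁻¹‖ ≤ 1/c`. -/
lemma specNorm_inv_le {M : Matrix (Fin n) (Fin n) ℝ} (hM : M.PosDef) {c : ℝ} (hc : 0 < c)
    (h : ∀ v : EuclideanSpace ℝ (Fin n), c * ⟪v, v⟫ ≤ ⟪v, Matrix.toEuclideanLin M v⟫) :
    specNorm M⁻¹ ≤ 1 / c := by
  rw [specNorm]
  refine ContinuousLinearMap.opNorm_le_bound _ (by positivity) fun v => ?_
  simp only [LinearMap.coe_toContinuousLinearMap']
  set u : EuclideanSpace ℝ (Fin n) := Matrix.toEuclideanLin M⁻¹ v with hu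
  have key : Matrix.toEuclideanLin M u = v := by
    rw [hu, Matrix.toEuclideanLin_apply, Matrix.toEuclideanLin_apply]
    simp [Matrix.mulVec_mulVec,
      Matrix.mul_nonsing_inv M ((Matrix.isUnit_iff_isUnit_det M).mp hM.isUnit)]
  have h1 : c * ⟪u, u⟫ ≤ ⟪u, v⟫ := key ▸ h u
  have h2 : ⟪u, v⟫ ≤ ‖u‖ * ‖v‖ := real_inner_le_norm u v
  have h3 : ⟪u, u⟫ = ‖u‖ ^ 2 := real_inner_self_eq_norm_sq u
  have h4 : c * ‖u‖ ≤ ‖v‖ := by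
    rcases (norm_nonneg u).eq_or_lt with h0 | h0
    · rw [← h0]; simpa using norm_nonneg v
    · nlinarith
  calc ‖u‖ = 1 / c * (c * ‖u‖) := by field_simp
    _ ≤ 1 / c * ‖v‖ := mul_le_mul_of_nonneg_left h4 (by positivity)

/-- Lower bound: `(1/‖M⁻¹‖) • 1 ≼ M` in inner product form. -/
lemma inner_le_specNorm_inv_mul {M : Matrix (Fin n) (Fin n) ℝ} (hM : M.PosDef)
    (v : EuclideanSpace ℝ (Fin n)) :
    ⟪v, v⟫ ≤ specNorm M⁻¹ * ⟪v, Matrix.toEuclideanLin M v⟫ := by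
  have hS : (M⁻¹).PosDef := hM.inv
  set w : EuclideanSpace ℝ (Fin n) := Matrix.toEuclideanLin M v with hw
  have hv : Matrix.toEuclideanLin M⁻¹ w = v := by
    rw [hw, Matrix.toEuclideanLin_apply, Matrix.toEuclideanLin_apply]
    simp [Matrix.mulVec_mulVec,
      Matrix.nonsing_inv_mul M ((Matrix.isUnit_iff_isUnit_det M).mp hM.isUnit)]
  have hcs := cs hS.posSemidef v w
  have e1 : ⟪v, Matrix.toEuclideanLin M⁻¹ w⟫ = ⟪v, v⟫ := by rw [hv]
  have e2 : ⟪w, Matrix.toEuclideanLin M⁻¹ w⟫ = ⟪v, w⟫ := by rw [hv, real_inner_comm]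
  rw [e1, e2] at hcs
  -- bound ⟪v, M⁻¹ v⟫ ≤ ‖M⁻¹‖ ⟪v,v⟫
  have h2 : ⟪v, Matrix.toEuclideanLin M⁻¹ v⟫ ≤ specNorm M⁻¹ * ⟪v, v⟫ := by
    have hb : ‖Matrix.toEuclideanLin M⁻¹ v‖ ≤ specNorm M⁻¹ * ‖v‖ := by
      have := (LinearMap.toContinuousLinearMap (Matrix.toEuclideanLin M⁻¹)).le_opNorm v
      rw [specNorm]
      simpa only [LinearMap.coe_toContinuousLinearMap'] using this
    calc ⟪v, Matrix.toEuclideanLin M⁻¹ v⟫ ≤ ‖v‖ * ‖Matrix.toEuclideanLin M⁻¹ v‖ :=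
          real_inner_le_norm _ _
      _ ≤ ‖v‖ * (specNorm M⁻¹ * ‖v‖) :=
          mul_le_mul_of_nonneg_left hb (norm_nonneg v)
      _ = specNorm M⁻¹ * ⟪v, v⟫ := by rw [real_inner_self_eq_norm_sq]; ring
  have hq : 0 ≤ ⟪v, w⟫ := by rw [hw]; exact inner_nonneg hM.posSemidef v
  have hqq : 0 ≤ ⟪v, v⟫ := real_inner_self_nonneg
  have hs0 : (0:ℝ) ≤ specNorm M⁻¹ := norm_nonneg _
  rcases hqq.eq_or_lt with h0 | h0
  · rw [← h0]; exact mul_nonneg hs0 hq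
  · nlinarith [mul_le_mul_of_nonneg_right h2 hq]

/-- harmonic mean ≤ arithmetic mean. -/
lemma harm {a b t : ℝ} (ha : 0 < a) (hb : 0 < b) (ht0 : 0 ≤ t) (ht1 : t ≤ 1) :
    1 / ((1 - t) / a + t / b) ≤ (1 - t) * a + t * b := by
  have hc : 0 < (1 - t) / a + t / b := by
    rcases ht1.lt_or_eq with h | h
    · have h1 : 0 < (1 - t) / a := div_pos (by linarith) ha
      have h2 : 0 ≤ t / b := div_nonneg ht0 hb.le
      linarith
    · rw [← h]; simp; positivity
  rw [div_le_iff₀ hc]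
  have key : ((1 - t) * a + t * b) * ((1 - t) / a + t / b)
      = ((1 - t) * a + t * b) * ((1 - t) * b + t * a) / (a * b) := by
    field_simp
  rw [key, le_div_iff₀ (by positivity)]
  nlinarith [mul_nonneg (mul_nonneg ht0 (by linarith : (0:ℝ) ≤ 1 - t)) (sq_nonneg (a - b))]

end SpecAux

theorem stmt3 {n : ℕ} (A B : Matrix (Fin n) (Fin n) ℝ)
    (hA : A.PosDef) (hB : B.PosDef) (t : ℝ) (ht0 : 0 ≤ t) (ht1 : t ≤ 1) :
    specNorm ((1 - t) • A + t • B)⁻¹ ≤ (1 - t) * specNorm A⁻¹ + t * specNorm B⁻¹ := by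
  rcases Nat.eq_zero_or_pos n with hn | hn
  · subst hn
    have hzero : ∀ X : Matrix (Fin 0) (Fin 0) ℝ, specNorm X = 0 := by
      intro X
      rw [specNorm]
      have hT : LinearMap.toContinuousLinearMap (Matrix.toEuclideanLin X) = 0 := by
        ext v i
        exact i.elim0
      rw [hT, norm_zero]
    rw [hzero, hzero, hzero]
    ring_nf
    rfl
  · -- positive dimension
    have hAin := SpecAux.inner_le_specNorm_inv_mul hA
    have hBin := SpecAux.inner_le_specNorm_inv_mul hB
    obtain ⟨i⟩ : Nonempty (Fin n) := ⟨⟨0, hn⟩⟩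
    have hv₀pos : 0 < ⟪(EuclideanSpace.single i 1 : EuclideanSpace ℝ (Fin n)),
        (EuclideanSpace.single i 1 : EuclideanSpace ℝ (Fin n))⟫ := by
      rw [real_inner_self_eq_norm_sq, EuclideanSpace.norm_single]
      norm_num
    have hsa : (0:ℝ) ≤ specNorm A⁻¹ := by rw [specNorm]; exact norm_nonneg _
    have hsb : (0:ℝ) ≤ specNorm B⁻¹ := by rw [specNorm]; exact norm_nonneg _
    have ha : 0 < specNorm A⁻¹ := by
      nlinarith [hAin (EuclideanSpace.single i 1), hv₀pos, hsa,
        SpecAux.inner_nonneg hA.posSemidef (EuclideanSpace.single i 1 :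
          EuclideanSpace ℝ (Fin n))]
    have hb : 0 < specNorm B⁻¹ := by
      nlinarith [hBin (EuclideanSpace.single i 1), hv₀pos, hsb,
        SpecAux.inner_nonneg hB.posSemidef (EuclideanSpace.single i 1 :
          EuclideanSpace ℝ (Fin n))]
    have hC : ((1 - t) • A + t • B).PosDef := by
      rw [posDef_iff_dotProduct_mulVec]; constructor
      · show ((1 - t) • A + t • B)ᴴ = (1 - t) • A + t • B
        rw [conjTranspose_add, conjTranspose_smul, conjTranspose_smul, hA.1.eq, hB.1.eq,
          star_trivial, star_trivial]
      · intro x hx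
        have h1 := hA.dotProduct_mulVec_pos hx
        have h2 := hB.dotProduct_mulVec_pos hx
        simp only [add_mulVec, smul_mulVec, dotProduct_add, dotProduct_smul,
          smul_eq_mul]
        rcases ht0.eq_or_lt with h | h
        · subst h; simpa using h1
        · nlinarith [mul_pos h h2, mul_nonneg (by linarith : (0:ℝ) ≤ 1 - t) h1.le]
    have hc : 0 < (1 - t) / specNorm A⁻¹ + t / specNorm B⁻¹ := by
      rcases ht1.lt_or_eq with h | h
      · have h1 : 0 < (1 - t) / specNorm A⁻¹ := div_pos (by linarith) ha
        have h2 : 0 ≤ t / specNorm B⁻¹ := div_nonneg ht0 hb.le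
        linarith
      · rw [← h]; simp; positivity
    have hcomb : ∀ v : EuclideanSpace ℝ (Fin n),
        ((1 - t) / specNorm A⁻¹ + t / specNorm B⁻¹) * ⟪v, v⟫
          ≤ ⟪v, Matrix.toEuclideanLin ((1 - t) • A + t • B) v⟫ := by
      intro v
      have expand : ⟪v, Matrix.toEuclideanLin ((1 - t) • A + t • B) v⟫
          = (1 - t) * ⟪v, Matrix.toEuclideanLin A v⟫
            + t * ⟪v, Matrix.toEuclideanLin B v⟫ := by
        rw [map_add, _root_.map_smul, _root_.map_smul]
        simp only [LinearMap.add_apply, LinearMap.smul_apply, inner_add_right,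
          real_inner_smul_right]
      have hqA := hAin v
      have hqB := hBin v
      have hqq : (0:ℝ) ≤ ⟪v, v⟫ := real_inner_self_nonneg
      have hA' : (1 - t) / specNorm A⁻¹ * ⟪v, v⟫
          ≤ (1 - t) * ⟪v, Matrix.toEuclideanLin A v⟫ := by
        rw [div_mul_eq_mul_div, div_le_iff₀ ha]
        nlinarith
      have hB' : t / specNorm B⁻¹ * ⟪v, v⟫ ≤ t * ⟪v, Matrix.toEuclideanLin B v⟫ := by
        rw [div_mul_eq_mul_div, div_le_iff₀ hb]
        nlinarith
      rw [expand]
      nlinarith [hA', hB']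
    have hmain := SpecAux.specNorm_inv_le hC hc hcomb
    calc specNorm ((1 - t) • A + t • B)⁻¹
        ≤ 1 / ((1 - t) / specNorm A⁻¹ + t / specNorm B⁻¹) := hmain
      _ ≤ (1 - t) * specNorm A⁻¹ + t * specNorm B⁻¹ := SpecAux.harm ha hb ht0 ht1
end

section
/- Let c₁, c₂, δ > 0 and let M = [[A, Bᵀ],[B, C]] and M̂ = [[Â, B̂ᵀ],[B̂, Ĉ]] be symmetric block matrices (A, Â of size n×n; C, Ĉ of size m×m) satisfying c₁·I ⪯ M ⪯ c₂·I, c₁·I ⪯ M̂ ⪯ c₂·I, and ‖M - M̂‖₂ ≤ δ. Then the Schur complements satisfy ‖(C - B A⁻¹ Bᵀ) - (Ĉ - B̂ Â⁻¹ B̂ᵀ)‖₂ ≤ δ(1 + c₂²/c₁²). -/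
open Matrix

namespace SpecAux

open scoped RealInnerProductSpace

variable {ι : Type*} [Fintype ι] [DecidableEq ι]

lemma inner_symm_dot (v w : ι → ℝ) :
    ⟪(WithLp.equiv 2 (ι → ℝ)).symm v, (WithLp.equiv 2 (ι → ℝ)).symm w⟫ = v ⬝ᵥ w := by
  simp [PiLp.inner_apply, dotProduct]
  exact Finset.sum_congr rfl fun i _ => mul_comm _ _

lemma dot_self_nonneg (v : ι → ℝ) : 0 ≤ v ⬝ᵥ v :=
  Finset.sum_nonneg fun i _ => mul_self_nonneg _

lemma dot_sq_le (v w : ι → ℝ) : (v ⬝ᵥ w) ^ 2 ≤ (v ⬝ᵥ v) * (w ⬝ᵥ w) := by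
  have := real_inner_mul_inner_self_le ((WithLp.equiv 2 (ι → ℝ)).symm v)
    ((WithLp.equiv 2 (ι → ℝ)).symm w)
  rw [inner_symm_dot, inner_symm_dot, inner_symm_dot] at this
  nlinarith [this]

lemma norm_symm_sq (v : ι → ℝ) :
    ‖(WithLp.equiv 2 (ι → ℝ)).symm v‖ ^ 2 = v ⬝ᵥ v := by
  rw [← real_inner_self_eq_norm_sq, inner_symm_dot]

lemma dot_mulVec_le (D : Matrix ι ι ℝ) (v : ι → ℝ) :
    v ⬝ᵥ D *ᵥ v ≤ specNorm D * (v ⬝ᵥ v) := by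
  set T := LinearMap.toContinuousLinearMap (Matrix.toEuclideanLin D) with hT
  set x := (WithLp.equiv 2 (ι → ℝ)).symm v with hx
  have h1 : (⟪x, T x⟫) = v ⬝ᵥ D *ᵥ v := by
    have : T x = (WithLp.equiv 2 (ι → ℝ)).symm (D *ᵥ v) := by
      simp [hT, hx, Matrix.toEuclideanLin_apply]
    rw [this, hx, inner_symm_dot]
  calc v ⬝ᵥ D *ᵥ v = ⟪x, T x⟫ := h1.symm
    _ ≤ ‖x‖ * ‖T x‖ := real_inner_le_norm _ _
    _ ≤ ‖x‖ * (‖T‖ * ‖x‖) :=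
        mul_le_mul_of_nonneg_left (T.le_opNorm x) (norm_nonneg _)
    _ = ‖T‖ * ‖x‖ ^ 2 := by ring
    _ = specNorm D * (v ⬝ᵥ v) := by rw [norm_symm_sq]; rfl

lemma bilin_bound {D : Matrix ι ι ℝ} (hD : D.IsSymm) {t : ℝ}
    (h : ∀ w : ι → ℝ, |w ⬝ᵥ D *ᵥ w| ≤ t * (w ⬝ᵥ w)) (u v : ι → ℝ) :
    u ⬝ᵥ D *ᵥ v ≤ (t / 2) * (u ⬝ᵥ u + v ⬝ᵥ v) := by
  have hsym : v ⬝ᵥ D *ᵥ u = u ⬝ᵥ D *ᵥ v := by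
    rw [dotProduct_mulVec, ← mulVec_transpose, hD.eq, dotProduct_comm]
  have h1 := (abs_le.mp (h (u + v))).2
  have h2 := (abs_le.mp (h (u - v))).1
  have e1 : (u + v) ⬝ᵥ D *ᵥ (u + v)
      = u ⬝ᵥ D *ᵥ u + 2 * (u ⬝ᵥ D *ᵥ v) + v ⬝ᵥ D *ᵥ v := by
    simp [mulVec_add, dotProduct_add, add_dotProduct, hsym]; ring
  have e2 : (u - v) ⬝ᵥ D *ᵥ (u - v)
      = u ⬝ᵥ D *ᵥ u - 2 * (u ⬝ᵥ D *ᵥ v) + v ⬝ᵥ D *ᵥ v := by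
    simp [mulVec_sub, dotProduct_sub, sub_dotProduct, hsym]; ring
  have e3 : (u + v) ⬝ᵥ (u + v) = u ⬝ᵥ u + 2 * (u ⬝ᵥ v) + v ⬝ᵥ v := by
    simp [dotProduct_add, add_dotProduct, dotProduct_comm v u]; ring
  have e4 : (u - v) ⬝ᵥ (u - v) = u ⬝ᵥ u - 2 * (u ⬝ᵥ v) + v ⬝ᵥ v := by
    simp [dotProduct_sub, sub_dotProduct, dotProduct_comm v u]; ring
  rw [e1, e3] at h1
  rw [e2, e4] at h2
  linarith

lemma quad_sq_bound {D : Matrix ι ι ℝ} (hD : D.IsSymm) {t : ℝ} (ht : 0 ≤ t)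
    (h : ∀ w : ι → ℝ, |w ⬝ᵥ D *ᵥ w| ≤ t * (w ⬝ᵥ w)) (v : ι → ℝ) :
    (D *ᵥ v) ⬝ᵥ (D *ᵥ v) ≤ t ^ 2 * (v ⬝ᵥ v) := by
  set w := D *ᵥ v with hw
  rcases eq_or_lt_of_le (dot_self_nonneg w) with h0 | h0
  · have h2 : (0:ℝ) ≤ t ^ 2 * (v ⬝ᵥ v) := mul_nonneg (sq_nonneg t) (dot_self_nonneg v)
    linarith
  · set a := Real.sqrt (v ⬝ᵥ v) with ha
    set b := Real.sqrt (w ⬝ᵥ w) with hb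
    have ha2 : a ^ 2 = v ⬝ᵥ v := Real.sq_sqrt (dot_self_nonneg v)
    have hb2 : b ^ 2 = w ⬝ᵥ w := Real.sq_sqrt (dot_self_nonneg w)
    have hbpos : 0 < b := Real.sqrt_pos.mpr h0
    have hanon : 0 ≤ a := Real.sqrt_nonneg _
    have key := bilin_bound hD h ((a / b) • w) v
    have lhs : ((a / b) • w) ⬝ᵥ D *ᵥ v = (a / b) * (w ⬝ᵥ w) := by
      rw [smul_dotProduct]; rfl
    have rhs : ((a / b) • w) ⬝ᵥ ((a / b) • w) = (a / b) ^ 2 * (w ⬝ᵥ w) := by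
      rw [smul_dotProduct, dotProduct_smul]; simp [smul_eq_mul]; ring
    rw [lhs, rhs, ← ha2, ← hb2] at key
    have hbne : b ≠ 0 := ne_of_gt hbpos
    have hab : a * b ≤ t * a ^ 2 := by
      have e1 : a / b * b ^ 2 = a * b := by field_simp
      have e2 : (a / b) ^ 2 * b ^ 2 = a ^ 2 := by field_simp
      rw [e1, e2] at key; linarith
    have hb_le : b ^ 2 ≤ t ^ 2 * a ^ 2 := by
      rcases eq_or_lt_of_le hanon with h0a | h0a
      · exfalso
        have hvv : v ⬝ᵥ v = 0 := by rw [← ha2, ← h0a]; ring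
        have hv0 : v = 0 := dotProduct_self_eq_zero.mp hvv
        rw [hv0, mulVec_zero] at hw
        rw [hw] at h0
        simp at h0
      · have hbta : b ≤ t * a := by
          have h' : a * b ≤ a * (t * a) := by nlinarith
          exact le_of_mul_le_mul_left h' h0a
        have := pow_le_pow_left₀ hbpos.le hbta 2
        nlinarith
    rw [hb2, ha2] at hb_le
    exact hb_le

lemma specNorm_le_of_quad {D : Matrix ι ι ℝ} (hD : D.IsSymm) {t : ℝ} (ht : 0 ≤ t)
    (h : ∀ w : ι → ℝ, |w ⬝ᵥ D *ᵥ w| ≤ t * (w ⬝ᵥ w)) :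
    specNorm D ≤ t := by
  apply ContinuousLinearMap.opNorm_le_bound _ ht
  intro x
  set v : ι → ℝ := WithLp.equiv 2 (ι → ℝ) x with hv
  have hx : x = (WithLp.equiv 2 (ι → ℝ)).symm v := rfl
  have happ : LinearMap.toContinuousLinearMap (Matrix.toEuclideanLin D) x
      = (WithLp.equiv 2 (ι → ℝ)).symm (D *ᵥ v) := by
    simp [hx, Matrix.toEuclideanLin_apply]
  rw [happ]
  have h1 : ‖(WithLp.equiv 2 (ι → ℝ)).symm (D *ᵥ v)‖ ^ 2 ≤ (t * ‖x‖) ^ 2 := by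
    rw [norm_symm_sq]
    have := quad_sq_bound hD ht h v
    have hxn : ‖x‖ ^ 2 = v ⬝ᵥ v := by rw [hx, norm_symm_sq]
    calc (D *ᵥ v) ⬝ᵥ (D *ᵥ v) ≤ t ^ 2 * (v ⬝ᵥ v) := this
      _ = (t * ‖x‖) ^ 2 := by rw [← hxn]; ring
  exact le_of_pow_le_pow_left₀ two_ne_zero (by positivity) h1

lemma psd_quad {W : Matrix ι ι ℝ} (hW : W.PosSemidef) (z : ι → ℝ) :
    0 ≤ z ⬝ᵥ W *ᵥ z := by simpa using hW.dotProduct_mulVec_nonneg z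

lemma quad_lower {W : Matrix ι ι ℝ} {c : ℝ} (h : (W - c • 1).PosSemidef) (z : ι → ℝ) :
    c * (z ⬝ᵥ z) ≤ z ⬝ᵥ W *ᵥ z := by
  have := psd_quad h z
  simp [sub_mulVec, dotProduct_sub, smul_mulVec, one_mulVec, dotProduct_smul,
    smul_eq_mul] at this
  linarith

lemma quad_upper {W : Matrix ι ι ℝ} {c : ℝ} (h : (c • 1 - W).PosSemidef) (z : ι → ℝ) :
    z ⬝ᵥ W *ᵥ z ≤ c * (z ⬝ᵥ z) := by
  have := psd_quad h z
  simp [sub_mulVec, dotProduct_sub, smul_mulVec, one_mulVec, dotProduct_smul,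
    smul_eq_mul] at this
  linarith

lemma specNorm_neg {κ : Type*} [Fintype κ] (D : Matrix κ ι ℝ) [Fintype ι] :
    specNorm (-D) = specNorm D := by
  unfold specNorm
  rw [map_neg, map_neg, norm_neg]

lemma tdot {κ : Type*} [Fintype κ] (P : Matrix ι κ ℝ) (x : ι → ℝ) (w : κ → ℝ) :
    (Pᵀ *ᵥ x) ⬝ᵥ w = x ⬝ᵥ P *ᵥ w := by
  rw [mulVec_transpose, ← dotProduct_mulVec]

lemma quadId {n m : Type*} [Fintype n] [Fintype m] [DecidableEq n] [DecidableEq m]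
    (P : Matrix n n ℝ) (Q : Matrix m n ℝ) (R : Matrix m m ℝ)
    (Th : Matrix m n ℝ) (x : m → ℝ) :
    (Sum.elim (-(Thᵀ *ᵥ x)) x) ⬝ᵥ (fromBlocks P Qᵀ Q R) *ᵥ (Sum.elim (-(Thᵀ *ᵥ x)) x)
      = x ⬝ᵥ (R - Th * Qᵀ - Q * Thᵀ + Th * P * Thᵀ) *ᵥ x := by
  simp only [fromBlocks_mulVec, Sum.elim_comp_inl, Sum.elim_comp_inr,
    sumElim_dotProduct_sumElim, mulVec_neg, dotProduct_neg, neg_dotProduct,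
    mulVec_add, dotProduct_add, add_dotProduct, sub_mulVec, add_mulVec,
    dotProduct_sub, tdot, mulVec_mulVec, Matrix.mul_assoc]
  ring

lemma block_lower {n m : Type*} [Fintype n] [Fintype m] [DecidableEq n] [DecidableEq m]
    {c : ℝ} {A : Matrix n n ℝ} {Bt : Matrix n m ℝ} {B : Matrix m n ℝ} {C : Matrix m m ℝ}
    (h : (fromBlocks A Bt B C - c • 1).PosSemidef) (v : n → ℝ) :
    c * (v ⬝ᵥ v) ≤ v ⬝ᵥ A *ᵥ v := by
  have h2 := quad_lower h (Sum.elim v 0)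
  simpa [fromBlocks_mulVec, Sum.elim_comp_inl, Sum.elim_comp_inr,
    sumElim_dotProduct_sumElim] using h2

lemma posDef_of_lower {n : Type*} [Fintype n] [DecidableEq n] {c : ℝ} (hc : 0 < c)
    {A : Matrix n n ℝ} (hA : A.IsSymm)
    (h : ∀ v : n → ℝ, c * (v ⬝ᵥ v) ≤ v ⬝ᵥ A *ᵥ v) : A.PosDef := by
  rw [posDef_iff_dotProduct_mulVec]
  constructor
  · rw [Matrix.IsHermitian, conjTranspose_eq_transpose_of_trivial]
    exact hA
  · intro v hv
    have h1 : 0 < v ⬝ᵥ v := by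
      rcases eq_or_lt_of_le (dot_self_nonneg v) with h0 | h0
      · exact absurd (dotProduct_self_eq_zero.mp h0.symm) hv
      · exact h0
    have := lt_of_lt_of_le (mul_pos hc h1) (h v)
    simpa using this

lemma fromBlocks_isSymm {n m : Type*} [Fintype n] [Fintype m]
    {A : Matrix n n ℝ} {C : Matrix m m ℝ} (hA : A.IsSymm) (hC : C.IsSymm)
    (B : Matrix m n ℝ) : (fromBlocks A Bᵀ B C).IsSymm := by
  unfold Matrix.IsSymm
  rw [fromBlocks_transpose, transpose_transpose, hA.eq, hC.eq]

lemma inv_sq_bound {n : Type*} [Fintype n] [DecidableEq n] {c : ℝ} (hc : 0 < c)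
    {A : Matrix n n ℝ} (hdet : IsUnit A.det)
    (h : ∀ v : n → ℝ, c * (v ⬝ᵥ v) ≤ v ⬝ᵥ A *ᵥ v) (w : n → ℝ) :
    (A⁻¹ *ᵥ w) ⬝ᵥ (A⁻¹ *ᵥ w) ≤ (1 / c ^ 2) * (w ⬝ᵥ w) := by
  set v := A⁻¹ *ᵥ w with hv
  have hAv : A *ᵥ v = w := by rw [hv, mulVec_mulVec, mul_nonsing_inv _ hdet, one_mulVec]
  have h1 : c * (v ⬝ᵥ v) ≤ v ⬝ᵥ w := by rw [← hAv]; exact h v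
  have h2 : (v ⬝ᵥ w) ^ 2 ≤ (v ⬝ᵥ v) * (w ⬝ᵥ w) := dot_sq_le v w
  have hvv := dot_self_nonneg v
  have hww := dot_self_nonneg w
  have key : c ^ 2 * (v ⬝ᵥ v) ≤ w ⬝ᵥ w := by
    rcases eq_or_lt_of_le hvv with h0 | h0
    · nlinarith
    · nlinarith [mul_nonneg hc.le hvv]
  rw [one_div, ← div_eq_inv_mul, le_div_iff₀ (by positivity)]
  linarith

lemma oneSide {n m : ℕ} (c₁ c₂ δ : ℝ) (hc₁ : 0 < c₁) (hc₂ : 0 < c₂) (hδ : 0 < δ)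
    (A Ahat : Matrix (Fin n) (Fin n) ℝ) (B Bhat : Matrix (Fin m) (Fin n) ℝ)
    (C Chat : Matrix (Fin m) (Fin m) ℝ)
    (hA : A.IsSymm) (hAhat : Ahat.IsSymm) (hChat : Chat.IsSymm)
    (hM1 : (Matrix.fromBlocks A Bᵀ B C
      - c₁ • (1 : Matrix (Fin n ⊕ Fin m) (Fin n ⊕ Fin m) ℝ)).PosSemidef)
    (hMhat1 : (Matrix.fromBlocks Ahat Bhatᵀ Bhat Chat
      - c₁ • (1 : Matrix (Fin n ⊕ Fin m) (Fin n ⊕ Fin m) ℝ)).PosSemidef)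
    (hMhat2 : (c₂ • (1 : Matrix (Fin n ⊕ Fin m) (Fin n ⊕ Fin m) ℝ)
      - Matrix.fromBlocks Ahat Bhatᵀ Bhat Chat).PosSemidef)
    (hdiff : specNorm (Matrix.fromBlocks A Bᵀ B C - Matrix.fromBlocks Ahat Bhatᵀ Bhat Chat) ≤ δ)
    (x : Fin m → ℝ) :
    x ⬝ᵥ ((C - B * A⁻¹ * Bᵀ) - (Chat - Bhat * Ahat⁻¹ * Bhatᵀ)) *ᵥ x
      ≤ (δ * (1 + c₂ ^ 2 / c₁ ^ 2)) * (x ⬝ᵥ x) := by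
  have hAlow := fun v => block_lower hM1 v
  have hAhatlow := fun v => block_lower hMhat1 v
  have hApd : A.PosDef := posDef_of_lower hc₁ hA hAlow
  have hAhatpd : Ahat.PosDef := posDef_of_lower hc₁ hAhat hAhatlow
  have hdetA : IsUnit A.det := hApd.det_pos.ne'.isUnit
  have hdetAh : IsUnit Ahat.det := hAhatpd.det_pos.ne'.isUnit
  have hAinvT : A⁻¹ᵀ = A⁻¹ := by rw [transpose_nonsing_inv, hA.eq]
  have hAhinvT : Ahat⁻¹ᵀ = Ahat⁻¹ := by rw [transpose_nonsing_inv, hAhat.eq]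
  obtain ⟨Th, hTh⟩ : ∃ T : Matrix (Fin m) (Fin n) ℝ, T = Bhat * Ahat⁻¹ := ⟨_, rfl⟩
  have hThT : Thᵀ = Ahat⁻¹ * Bhatᵀ := by rw [hTh, transpose_mul, hAhinvT]
  -- completing the square
  have hc1 : B * A⁻¹ * A = B := nonsing_inv_mul_cancel_right _ _ hdetA
  have hc2 : A * (A⁻¹ * Bᵀ) = Bᵀ := mul_nonsing_inv_cancel_left _ _ hdetA
  have hF : (Th - B * A⁻¹) * A * (Th - B * A⁻¹)ᵀ
      = (C - Th * Bᵀ - B * Thᵀ + Th * A * Thᵀ) - (C - B * A⁻¹ * Bᵀ) := by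
    rw [transpose_sub, transpose_mul, hAinvT, Matrix.sub_mul, hc1, Matrix.sub_mul,
      Matrix.mul_sub, Matrix.mul_sub, Matrix.mul_assoc Th A (A⁻¹ * Bᵀ), hc2,
      ← Matrix.mul_assoc B A⁻¹ Bᵀ]
    abel
  have hFpsd : ((Th - B * A⁻¹) * A * (Th - B * A⁻¹)ᵀ).PosSemidef := by
    have h0 := hApd.posSemidef.mul_mul_conjTranspose_same (Th - B * A⁻¹)
    rwa [conjTranspose_eq_transpose_of_trivial] at h0
  have hsq : x ⬝ᵥ (C - B * A⁻¹ * Bᵀ) *ᵥ x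
      ≤ x ⬝ᵥ (C - Th * Bᵀ - B * Thᵀ + Th * A * Thᵀ) *ᵥ x := by
    have h0 := psd_quad hFpsd x
    rw [hF, sub_mulVec, dotProduct_sub] at h0
    linarith
  -- hat side identity
  have hhatId : Chat - Th * Bhatᵀ - Bhat * Thᵀ + Th * Ahat * Thᵀ
      = Chat - Bhat * Ahat⁻¹ * Bhatᵀ := by
    rw [hThT, hTh, nonsing_inv_mul_cancel_right _ _ hdetAh,
      Matrix.mul_assoc Bhat Ahat⁻¹ Bhatᵀ]
    abel
  -- quadratic identities
  obtain ⟨z, hz⟩ : ∃ z : Fin n ⊕ Fin m → ℝ, z = Sum.elim (-(Thᵀ *ᵥ x)) x := ⟨_, rfl⟩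
  have hq1 : z ⬝ᵥ (fromBlocks A Bᵀ B C) *ᵥ z
      = x ⬝ᵥ (C - Th * Bᵀ - B * Thᵀ + Th * A * Thᵀ) *ᵥ x := by
    rw [hz]; exact quadId A B C Th x
  have hq2 : z ⬝ᵥ (fromBlocks Ahat Bhatᵀ Bhat Chat) *ᵥ z
      = x ⬝ᵥ (Chat - Bhat * Ahat⁻¹ * Bhatᵀ) *ᵥ x := by
    rw [hz, quadId Ahat Bhat Chat Th x, hhatId]
  have hzd : z ⬝ᵥ (fromBlocks A Bᵀ B C - fromBlocks Ahat Bhatᵀ Bhat Chat) *ᵥ z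
      ≤ δ * (z ⬝ᵥ z) :=
    le_trans (dot_mulVec_le _ _) (mul_le_mul_of_nonneg_right hdiff (dot_self_nonneg z))
  -- bound on Bhatᵀ *ᵥ x
  have hBh : (Bhatᵀ *ᵥ x) ⬝ᵥ (Bhatᵀ *ᵥ x) ≤ c₂ ^ 2 * (x ⬝ᵥ x) := by
    have hMsymm : (fromBlocks Ahat Bhatᵀ Bhat Chat).IsSymm :=
      fromBlocks_isSymm hAhat hChat Bhat
    have habs : ∀ w : Fin n ⊕ Fin m → ℝ,
        |w ⬝ᵥ (fromBlocks Ahat Bhatᵀ Bhat Chat) *ᵥ w| ≤ c₂ * (w ⬝ᵥ w) := by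
      intro w
      have hl := quad_lower hMhat1 w
      have hu := quad_upper hMhat2 w
      have h0 : 0 ≤ w ⬝ᵥ w := dot_self_nonneg w
      rw [abs_le]
      refine ⟨?_, hu⟩
      nlinarith [mul_nonneg hc₁.le h0, mul_nonneg hc₂.le h0]
    have hsqb := quad_sq_bound hMsymm hc₂.le habs (Sum.elim 0 x)
    have hMv : (fromBlocks Ahat Bhatᵀ Bhat Chat) *ᵥ (Sum.elim 0 x)
        = Sum.elim (Bhatᵀ *ᵥ x) (Chat *ᵥ x) := by
      rw [fromBlocks_mulVec]; simp
    rw [hMv, sumElim_dotProduct_sumElim, sumElim_dotProduct_sumElim] at hsqb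
    simp only [dotProduct_zero, zero_dotProduct, zero_add] at hsqb
    linarith [dot_self_nonneg (Chat *ᵥ x)]
  have hTx : (Thᵀ *ᵥ x) ⬝ᵥ (Thᵀ *ᵥ x) ≤ (c₂ ^ 2 / c₁ ^ 2) * (x ⬝ᵥ x) := by
    rw [hThT, ← mulVec_mulVec]
    calc (Ahat⁻¹ *ᵥ (Bhatᵀ *ᵥ x)) ⬝ᵥ (Ahat⁻¹ *ᵥ (Bhatᵀ *ᵥ x))
        ≤ (1 / c₁ ^ 2) * ((Bhatᵀ *ᵥ x) ⬝ᵥ (Bhatᵀ *ᵥ x)) :=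
          inv_sq_bound hc₁ hdetAh hAhatlow (Bhatᵀ *ᵥ x)
      _ ≤ (1 / c₁ ^ 2) * (c₂ ^ 2 * (x ⬝ᵥ x)) :=
          mul_le_mul_of_nonneg_left hBh (by positivity)
      _ = (c₂ ^ 2 / c₁ ^ 2) * (x ⬝ᵥ x) := by ring
  have hzz : z ⬝ᵥ z = (Thᵀ *ᵥ x) ⬝ᵥ (Thᵀ *ᵥ x) + x ⬝ᵥ x := by
    rw [hz, sumElim_dotProduct_sumElim, neg_dotProduct, dotProduct_neg, neg_neg]
  rw [hzz] at hzd
  have hzsub : z ⬝ᵥ (fromBlocks A Bᵀ B C - fromBlocks Ahat Bhatᵀ Bhat Chat) *ᵥ z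
      = x ⬝ᵥ (C - Th * Bᵀ - B * Thᵀ + Th * A * Thᵀ) *ᵥ x
        - x ⬝ᵥ (Chat - Bhat * Ahat⁻¹ * Bhatᵀ) *ᵥ x := by
    rw [sub_mulVec, dotProduct_sub, hq1, hq2]
  have hfin : x ⬝ᵥ ((C - B * A⁻¹ * Bᵀ) - (Chat - Bhat * Ahat⁻¹ * Bhatᵀ)) *ᵥ x
      = x ⬝ᵥ (C - B * A⁻¹ * Bᵀ) *ᵥ x - x ⬝ᵥ (Chat - Bhat * Ahat⁻¹ * Bhatᵀ) *ᵥ x := by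
    rw [sub_mulVec, dotProduct_sub]
  have hxx : 0 ≤ x ⬝ᵥ x := dot_self_nonneg x
  have hstep : δ * ((Thᵀ *ᵥ x) ⬝ᵥ (Thᵀ *ᵥ x) + x ⬝ᵥ x)
      ≤ δ * ((c₂ ^ 2 / c₁ ^ 2) * (x ⬝ᵥ x) + x ⬝ᵥ x) :=
    mul_le_mul_of_nonneg_left (by linarith) hδ.le
  have hring : δ * ((c₂ ^ 2 / c₁ ^ 2) * (x ⬝ᵥ x) + x ⬝ᵥ x)
      = (δ * (1 + c₂ ^ 2 / c₁ ^ 2)) * (x ⬝ᵥ x) := by ring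
  rw [hfin]
  linarith [hsq, hzsub, hzd, hstep]

end SpecAux

theorem stmt6 {n m : ℕ} (c₁ c₂ δ : ℝ) (hc₁ : 0 < c₁) (hc₂ : 0 < c₂) (hδ : 0 < δ)
    (A Ahat : Matrix (Fin n) (Fin n) ℝ) (B Bhat : Matrix (Fin m) (Fin n) ℝ)
    (C Chat : Matrix (Fin m) (Fin m) ℝ)
    (hA : A.IsSymm) (hAhat : Ahat.IsSymm) (hC : C.IsSymm) (hChat : Chat.IsSymm)
    (hM1 : (Matrix.fromBlocks A Bᵀ B C
      - c₁ • (1 : Matrix (Fin n ⊕ Fin m) (Fin n ⊕ Fin m) ℝ)).PosSemidef)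
    (hM2 : (c₂ • (1 : Matrix (Fin n ⊕ Fin m) (Fin n ⊕ Fin m) ℝ)
      - Matrix.fromBlocks A Bᵀ B C).PosSemidef)
    (hMhat1 : (Matrix.fromBlocks Ahat Bhatᵀ Bhat Chat
      - c₁ • (1 : Matrix (Fin n ⊕ Fin m) (Fin n ⊕ Fin m) ℝ)).PosSemidef)
    (hMhat2 : (c₂ • (1 : Matrix (Fin n ⊕ Fin m) (Fin n ⊕ Fin m) ℝ)
      - Matrix.fromBlocks Ahat Bhatᵀ Bhat Chat).PosSemidef)
    (hdiff : specNorm (Matrix.fromBlocks A Bᵀ B C - Matrix.fromBlocks Ahat Bhatᵀ Bhat Chat) ≤ δ) :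
    specNorm ((C - B * A⁻¹ * Bᵀ) - (Chat - Bhat * Ahat⁻¹ * Bhatᵀ)) ≤ δ * (1 + c₂ ^ 2 / c₁ ^ 2) := by
  have hAlow := fun v => SpecAux.block_lower hM1 v
  have hAhatlow := fun v => SpecAux.block_lower hMhat1 v
  have hApd : A.PosDef := SpecAux.posDef_of_lower hc₁ hA hAlow
  have hAhatpd : Ahat.PosDef := SpecAux.posDef_of_lower hc₁ hAhat hAhatlow
  have hdetA : IsUnit A.det := hApd.det_pos.ne'.isUnit
  have hdetAh : IsUnit Ahat.det := hAhatpd.det_pos.ne'.isUnit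
  have hAinvT : A⁻¹ᵀ = A⁻¹ := by rw [transpose_nonsing_inv, hA.eq]
  have hAhinvT : Ahat⁻¹ᵀ = Ahat⁻¹ := by rw [transpose_nonsing_inv, hAhat.eq]
  have hDsymm : ((C - B * A⁻¹ * Bᵀ) - (Chat - Bhat * Ahat⁻¹ * Bhatᵀ)).IsSymm := by
    unfold Matrix.IsSymm
    simp only [transpose_sub, transpose_mul, transpose_transpose, hAinvT, hAhinvT,
      hC.eq, hChat.eq, Matrix.mul_assoc]
  apply SpecAux.specNorm_le_of_quad hDsymm (by positivity)
  intro w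
  rw [abs_le]
  constructor
  · have hdiff' : specNorm (Matrix.fromBlocks Ahat Bhatᵀ Bhat Chat
        - Matrix.fromBlocks A Bᵀ B C) ≤ δ := by
      rw [show Matrix.fromBlocks Ahat Bhatᵀ Bhat Chat - Matrix.fromBlocks A Bᵀ B C
        = -(Matrix.fromBlocks A Bᵀ B C - Matrix.fromBlocks Ahat Bhatᵀ Bhat Chat)
        from (neg_sub _ _).symm, SpecAux.specNorm_neg]
      exact hdiff
    have h2 := SpecAux.oneSide c₁ c₂ δ hc₁ hc₂ hδ Ahat A Bhat B Chat C
      hAhat hA hC hMhat1 hM1 hM2 hdiff' w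
    rw [show (Chat - Bhat * Ahat⁻¹ * Bhatᵀ) - (C - B * A⁻¹ * Bᵀ)
      = -((C - B * A⁻¹ * Bᵀ) - (Chat - Bhat * Ahat⁻¹ * Bhatᵀ)) from (neg_sub _ _).symm,
      neg_mulVec, dotProduct_neg] at h2
    linarith
  · exact SpecAux.oneSide c₁ c₂ δ hc₁ hc₂ hδ A Ahat B Bhat C Chat
      hA hAhat hChat hM1 hMhat1 hMhat2 hdiff w
end

section
/- Let F₀, …, F_{M-1} be the selection matrices with F_k = (1/√M)[0 I 0] picking out coordinates kn through (k+p+1)n-1 of ℝ^{(M+p)n}, and let v ∈ ℝ^{(p+1)n} with ‖v‖₂ ≤ 1. Then ‖Σ_{k=0}^{M-1} F_kᵀ v vᵀ F_k‖_F² ≤ (2p+1)/M and ‖Σ_{k=0}^{M-1} F_kᵀ v vᵀ F_k‖₂ ≤ (p+1)/M. -/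
open Matrix

/-- Frobenius norm of a real matrix. -/
noncomputable def frobNorm {m n : Type*} [Fintype m] [Fintype n]
    (A : Matrix m n ℝ) : ℝ :=
  Real.sqrt (∑ i, ∑ j, (A i j) ^ 2)

/-- The selection matrix `F k = (1/√M)[0 I 0]` picking out the window of
block-coordinates `k, …, k+p` out of `M+p` blocks of size `n`. -/
noncomputable def selMatrix (M p n k : ℕ) :
    Matrix (Fin (p + 1) × Fin n) (Fin (M + p) × Fin n) ℝ :=
  fun li jd => if (jd.1 : ℕ) = k + (li.1 : ℕ) ∧ li.2 = jd.2 then 1 / Real.sqrt M else 0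

/- ## Auxiliary lemmas -/

noncomputable def gvec {n : ℕ} (M p : ℕ) (v : Fin (p+1) × Fin n → ℝ) (k : ℕ) :
    Fin (M + p) × Fin n → ℝ :=
  Matrix.vecMul v (selMatrix M p n k)

lemma gvec_zero {n : ℕ} (M p : ℕ) (v : Fin (p+1) × Fin n → ℝ) (k : ℕ)
    (j : Fin (M+p)) (d : Fin n) (hj : ¬ (k ≤ (j:ℕ) ∧ (j:ℕ) ≤ k + p)) :
    gvec M p v k (j, d) = 0 := by
  simp only [gvec, vecMul, dotProduct, selMatrix, Fintype.sum_prod_type]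
  apply Finset.sum_eq_zero
  intro l _
  apply Finset.sum_eq_zero
  intro i _
  rw [if_neg, mul_zero]
  rintro ⟨h1, h2⟩
  exact hj ⟨by omega, by have := l.isLt; omega⟩

lemma gvec_mk {n : ℕ} (M p : ℕ) (v : Fin (p+1) × Fin n → ℝ) (k : ℕ)
    (j : Fin (M+p)) (d : Fin n) (hk : k ≤ (j:ℕ)) (hj : (j:ℕ) ≤ k + p)
    (h2 : (j:ℕ) - k < p + 1) :
    gvec M p v k (j, d) = v (⟨(j:ℕ) - k, h2⟩, d) / Real.sqrt M := by
  simp only [gvec, vecMul, dotProduct, selMatrix, Fintype.sum_prod_type]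
  rw [Finset.sum_eq_single (⟨(j:ℕ) - k, h2⟩ : Fin (p+1))]
  · rw [Finset.sum_eq_single d]
    · rw [if_pos ⟨by simp; omega, rfl⟩]; ring
    · intro i _ hi
      rw [if_neg, mul_zero]
      rintro ⟨-, h2⟩; exact hi h2
    · simp
  · intro l _ hl
    apply Finset.sum_eq_zero
    intro i _
    rw [if_neg, mul_zero]
    rintro ⟨h1, -⟩
    exact hl (by apply Fin.ext; simp; omega)
  · simp

lemma entry_eq {n : ℕ} (M p k : ℕ) (v : Fin (p+1) × Fin n → ℝ)
    (a b : Fin (M+p) × Fin n) :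
    ((selMatrix M p n k)ᵀ * Matrix.vecMulVec v v * selMatrix M p n k) a b
      = gvec M p v k a * gvec M p v k b := by
  simp only [gvec, Matrix.mul_apply, Matrix.vecMulVec_apply, Matrix.transpose_apply,
    Matrix.vecMul, dotProduct, Finset.sum_mul, Finset.mul_sum]
  apply Finset.sum_congr rfl; intro i _
  apply Finset.sum_congr rfl; intro i' _
  ring

lemma gvec_dot {n : ℕ} (M p k : ℕ) (hk : k < M) (v : Fin (p+1) × Fin n → ℝ)
    (x : Fin (M+p) × Fin n → ℝ) :
    gvec M p v k ⬝ᵥ x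
      = (∑ ld : Fin (p+1) × Fin n,
          v ld * x (⟨k + (ld.1:ℕ), by have := ld.1.isLt; omega⟩, ld.2)) / Real.sqrt M := by
  classical
  set e : Fin (p+1) × Fin n → Fin (M+p) × Fin n :=
    fun ld => (⟨k + (ld.1:ℕ), by have := ld.1.isLt; omega⟩, ld.2) with he_def
  have he : Function.Injective e := by
    intro a b h
    simp only [he_def, Prod.mk.injEq, Fin.mk.injEq] at h
    exact Prod.ext (Fin.ext (by omega)) h.2
  have h1 : ∀ a ∈ Finset.univ, a ∉ Finset.univ.image e →
      gvec M p v k a * x a = 0 := by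
    rintro ⟨j, d⟩ - ha
    rw [gvec_zero M p v k j d, zero_mul]
    rintro ⟨hj1, hj2⟩
    exact ha (Finset.mem_image.2 ⟨(⟨(j:ℕ) - k, by omega⟩, d), Finset.mem_univ _,
      by simp [he_def]; exact Fin.ext (by simp; omega)⟩)
  rw [dotProduct, ← Finset.sum_subset (Finset.subset_univ (Finset.univ.image e)) h1,
    Finset.sum_image (fun a _ b _ h => he h)]
  rw [Finset.sum_div]
  apply Finset.sum_congr rfl
  rintro ⟨l, d⟩ _
  simp only [he_def]
  rw [gvec_mk M p v k _ d (by simp) (by have := l.isLt; simpa using by omega) (by have := l.isLt; simp; omega)]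
  have hl : ∀ (h : k + (l:ℕ) - k < p + 1), (⟨k + (l:ℕ) - k, h⟩ : Fin (p+1)) = l :=
    fun h => Fin.ext (by simp)
  rw [hl]
  ring

lemma inj_sum_le {α β : Type*} [Fintype β] [DecidableEq β] (s : Finset α) (ι : α → β)
    (hι : ∀ a ∈ s, ∀ b ∈ s, ι a = ι b → a = b) (f : β → ℝ) (hf : ∀ b, 0 ≤ f b) :
    ∑ a ∈ s, f (ι a) ≤ ∑ b, f b := by
  rw [← Finset.sum_image hι]
  exact Finset.sum_le_sum_of_subset_of_nonneg (Finset.subset_univ _) (fun b _ _ => hf b)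

lemma window_sum_le (M p : ℕ) (w : ℕ → ℝ) (hw : ∀ j, 0 ≤ w j) (l : ℕ) (hl : l ≤ p) :
    ∑ k ∈ Finset.range M, w (k + l) ≤ ∑ j ∈ Finset.range (M + p), w j := by
  have h1 : ∑ k ∈ Finset.range M, w (k + l) = ∑ j ∈ Finset.Ico l (M + l), w j := by
    rw [Finset.sum_Ico_eq_sum_range]
    simp only [Nat.add_sub_cancel]
    exact Finset.sum_congr rfl fun k _ => by rw [add_comm]
  rw [h1]
  apply Finset.sum_le_sum_of_subset_of_nonneg
  · intro j hj
    simp only [Finset.mem_Ico, Finset.mem_range] at hj ⊢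
    omega
  · intro j _ _
    exact hw j

lemma sum_sq_sum_eq {ι κ : Type*} [Fintype ι] (s : Finset κ) (g : κ → ι → ℝ) :
    ∑ a, ∑ b, (∑ k ∈ s, g k a * g k b)^2
      = ∑ k ∈ s, ∑ k' ∈ s, (∑ a, g k a * g k' a)^2 := by
  calc ∑ a, ∑ b, (∑ k ∈ s, g k a * g k b)^2
      = ∑ a, ∑ b, ∑ k ∈ s, ∑ k' ∈ s, (g k a * g k' a) * (g k b * g k' b) := by
        apply Finset.sum_congr rfl; intro a _
        apply Finset.sum_congr rfl; intro b _
        rw [sq, Finset.sum_mul_sum]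
        apply Finset.sum_congr rfl; intro k _
        apply Finset.sum_congr rfl; intro k' _
        ring
    _ = ∑ a, ∑ k ∈ s, ∑ b, ∑ k' ∈ s, (g k a * g k' a) * (g k b * g k' b) :=
        Finset.sum_congr rfl fun a _ => Finset.sum_comm
    _ = ∑ k ∈ s, ∑ a, ∑ b, ∑ k' ∈ s, (g k a * g k' a) * (g k b * g k' b) :=
        Finset.sum_comm
    _ = ∑ k ∈ s, ∑ a, ∑ k' ∈ s, ∑ b, (g k a * g k' a) * (g k b * g k' b) :=
        Finset.sum_congr rfl fun k _ => Finset.sum_congr rfl fun a _ => Finset.sum_comm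
    _ = ∑ k ∈ s, ∑ k' ∈ s, ∑ a, ∑ b, (g k a * g k' a) * (g k b * g k' b) :=
        Finset.sum_congr rfl fun k _ => Finset.sum_comm
    _ = ∑ k ∈ s, ∑ k' ∈ s, (∑ a, g k a * g k' a)^2 := by
        apply Finset.sum_congr rfl; intro k _
        apply Finset.sum_congr rfl; intro k' _
        rw [sq, Finset.sum_mul_sum]

theorem stmt16 {n : ℕ} (M p : ℕ) (hM : 0 < M)
    (v : Fin (p + 1) × Fin n → ℝ) (hv : ∑ i, (v i) ^ 2 ≤ 1) :
    frobNorm (∑ k ∈ Finset.range M,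
        (selMatrix M p n k)ᵀ * Matrix.vecMulVec v v * selMatrix M p n k) ^ 2
      ≤ (2 * p + 1) / M ∧
    specNorm (∑ k ∈ Finset.range M,
        (selMatrix M p n k)ᵀ * Matrix.vecMulVec v v * selMatrix M p n k)
      ≤ (p + 1) / M := by
  classical
  have hM0 : (0:ℝ) < M := by exact_mod_cast hM
  have hs0 : (0:ℝ) ≤ ∑ i, (v i)^2 := Finset.sum_nonneg fun i _ => sq_nonneg _
  have hA : ∀ a b, (∑ k ∈ Finset.range M,
      (selMatrix M p n k)ᵀ * Matrix.vecMulVec v v * selMatrix M p n k) a b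
      = ∑ k ∈ Finset.range M, gvec M p v k a * gvec M p v k b := by
    intro a b
    rw [Matrix.sum_apply]
    exact Finset.sum_congr rfl fun k _ => entry_eq M p k v a b
  -- value of gvec at a window point
  have hmk : ∀ (k : ℕ) (l : Fin (p+1)) (d : Fin n) (h : k + (l:ℕ) < M + p),
      gvec M p v k (⟨k + (l:ℕ), h⟩, d) = v (l, d) / Real.sqrt M := by
    intro k l d h
    rw [gvec_mk M p v k ⟨k + (l:ℕ), h⟩ d (by simp) (by have := l.isLt; simpa using by omega)
      (by have := l.isLt; simp; omega)]
    have hl : ∀ (hh : (↑(⟨k + (l:ℕ), h⟩ : Fin (M+p)) : ℕ) - k < p + 1),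
        (⟨(↑(⟨k + (l:ℕ), h⟩ : Fin (M+p)) : ℕ) - k, hh⟩ : Fin (p+1)) = l :=
      fun hh => Fin.ext (by simp)
    rw [hl]
  -- separated windows are orthogonal
  have hdot0 : ∀ k k', k < M → (k + p < k' ∨ k' + p < k) →
      gvec M p v k ⬝ᵥ gvec M p v k' = 0 := by
    intro k k' hk hsep
    rw [gvec_dot M p k hk v]
    rw [Finset.sum_eq_zero, zero_div]
    rintro ⟨l, d⟩ -
    rw [gvec_zero M p v k' _ d (by simp only [Fin.val_mk]; have := l.isLt; omega), mul_zero]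
  -- squared norm of each gvec
  have hnormsq : ∀ k, k < M →
      ∑ a, gvec M p v k a ^ 2 = (∑ i, (v i)^2) / M := by
    intro k hk
    have h1 : ∑ a, gvec M p v k a ^ 2 = gvec M p v k ⬝ᵥ gvec M p v k := by
      rw [dotProduct]
      exact Finset.sum_congr rfl fun a _ => pow_two _
    rw [h1, gvec_dot M p k hk v]
    have h2 : ∀ ld : Fin (p+1) × Fin n,
        v ld * gvec M p v k (⟨k + (ld.1:ℕ), by have := ld.1.isLt; omega⟩, ld.2)
          = v ld ^ 2 / Real.sqrt M := by
      rintro ⟨l, d⟩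
      rw [hmk k l d]
      rw [pow_two]; ring
    rw [Finset.sum_congr rfl fun ld _ => h2 ld, ← Finset.sum_div, div_div,
      Real.mul_self_sqrt hM0.le]
  -- Cauchy–Schwarz bound for the overlaps
  have hCS : ∀ k k', k < M → k' < M →
      (gvec M p v k ⬝ᵥ gvec M p v k')^2 ≤ 1 / (M:ℝ)^2 := by
    intro k k' hk hk'
    have h1 := Finset.sum_mul_sq_le_sq_mul_sq Finset.univ (gvec M p v k) (gvec M p v k')
    rw [← dotProduct] at h1
    refine h1.trans ?_
    rw [hnormsq k hk, hnormsq k' hk']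
    have hs1 : (∑ i, (v i)^2) / (M:ℝ) ≤ 1 / M := by
      gcongr
    calc (∑ i, (v i)^2) / (M:ℝ) * ((∑ i, (v i)^2) / M)
        ≤ 1/(M:ℝ) * (1/M) := by
          apply mul_le_mul hs1 hs1 (by positivity) (by positivity)
      _ = 1 / (M:ℝ)^2 := by ring
  constructor
  · -- Frobenius part
    have hfrob : ∑ a, ∑ b, ((∑ k ∈ Finset.range M,
        (selMatrix M p n k)ᵀ * Matrix.vecMulVec v v * selMatrix M p n k) a b)^2
        ≤ (2*(p:ℝ)+1)/M := by
      have e1 : ∑ a, ∑ b, ((∑ k ∈ Finset.range M,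
          (selMatrix M p n k)ᵀ * Matrix.vecMulVec v v * selMatrix M p n k) a b)^2
          = ∑ k ∈ Finset.range M, ∑ k' ∈ Finset.range M,
            (∑ a, gvec M p v k a * gvec M p v k' a)^2 := by
        simp_rw [hA]
        exact sum_sq_sum_eq _ _
      rw [e1]
      have inner : ∀ k ∈ Finset.range M, ∑ k' ∈ Finset.range M,
          (∑ a, gvec M p v k a * gvec M p v k' a)^2 ≤ (2*(p:ℝ)+1) * (1/(M:ℝ)^2) := by
        intro k hk
        rw [Finset.mem_range] at hk
        calc ∑ k' ∈ Finset.range M, (∑ a, gvec M p v k a * gvec M p v k' a)^2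
            ≤ ∑ k' ∈ Finset.range M,
              (if k ≤ k' + p ∧ k' ≤ k + p then 1/(M:ℝ)^2 else 0) := by
              apply Finset.sum_le_sum
              intro k' hk'
              rw [Finset.mem_range] at hk'
              by_cases hc : k ≤ k' + p ∧ k' ≤ k + p
              · rw [if_pos hc, ← dotProduct]
                exact hCS k k' hk hk'
              · rw [if_neg hc, ← dotProduct, hdot0 k k' hk (by omega)]
                simp
          _ = ((Finset.range M).filter fun k' => k ≤ k' + p ∧ k' ≤ k + p).card
                * (1/(M:ℝ)^2) := by
              rw [← Finset.sum_filter, Finset.sum_const, nsmul_eq_mul]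
          _ ≤ (2*(p:ℝ)+1) * (1/(M:ℝ)^2) := by
              apply mul_le_mul_of_nonneg_right _ (by positivity)
              have hsub : ((Finset.range M).filter fun k' => k ≤ k' + p ∧ k' ≤ k + p)
                  ⊆ Finset.Icc (k-p) (k+p) := by
                intro k' h
                simp only [Finset.mem_filter, Finset.mem_range, Finset.mem_Icc] at h ⊢
                omega
              have hcard := (Finset.card_le_card hsub).trans_eq (Nat.card_Icc _ _)
              have : ((Finset.range M).filter fun k' => k ≤ k' + p ∧ k' ≤ k + p).card
                  ≤ 2*p+1 := by omega
              exact_mod_cast this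
      calc ∑ k ∈ Finset.range M, ∑ k' ∈ Finset.range M,
            (∑ a, gvec M p v k a * gvec M p v k' a)^2
          ≤ ∑ _k ∈ Finset.range M, (2*(p:ℝ)+1) * (1/(M:ℝ)^2) := Finset.sum_le_sum inner
        _ = M * ((2*(p:ℝ)+1) * (1/(M:ℝ)^2)) := by
            rw [Finset.sum_const, Finset.card_range, nsmul_eq_mul]
        _ = (2*(p:ℝ)+1)/M := by field_simp
    rw [frobNorm]; refine (Real.sq_sqrt (Finset.sum_nonneg fun a _ =>
      Finset.sum_nonneg fun b _ => sq_nonneg _)).trans_le ?_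
    exact_mod_cast hfrob
  · -- spectral part
    unfold specNorm
    apply ContinuousLinearMap.opNorm_le_bound _ (by positivity)
    intro x
    have hval : (LinearMap.toContinuousLinearMap (Matrix.toEuclideanLin
        (∑ k ∈ Finset.range M,
          (selMatrix M p n k)ᵀ * Matrix.vecMulVec v v * selMatrix M p n k))) x
        = (WithLp.equiv 2 (Fin (M+p) × Fin n → ℝ)).symm
            ((∑ k ∈ Finset.range M,
              (selMatrix M p n k)ᵀ * Matrix.vecMulVec v v * selMatrix M p n k)
              *ᵥ (fun a => x a)) := rfl
    rw [hval, EuclideanSpace.norm_eq, EuclideanSpace.norm_eq]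
    simp only [WithLp.equiv_symm_apply, WithLp.ofLp_toLp, Real.norm_eq_abs, sq_abs]
    set y : Fin (M+p) × Fin n → ℝ := fun a => x a with hy
    -- extended coordinates
    set Y : ℕ → Fin n → ℝ := fun j d => if h : j < M + p then y (⟨j, h⟩, d) else 0 with hY
    have hAy : ∀ a, ((∑ k ∈ Finset.range M,
        (selMatrix M p n k)ᵀ * Matrix.vecMulVec v v * selMatrix M p n k) *ᵥ y) a
        = ∑ k ∈ Finset.range M, gvec M p v k a * (gvec M p v k ⬝ᵥ y) := by
      intro a
      show (∑ k ∈ Finset.range M,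
        (selMatrix M p n k)ᵀ * Matrix.vecMulVec v v * selMatrix M p n k) a ⬝ᵥ y = _
      rw [dotProduct]
      simp_rw [hA, Finset.sum_mul]
      rw [Finset.sum_comm]
      apply Finset.sum_congr rfl
      intro k _
      rw [dotProduct, Finset.mul_sum]
      apply Finset.sum_congr rfl
      intro b _
      ring
    have claimA : ∑ k ∈ Finset.range M, (gvec M p v k ⬝ᵥ y)^2
        ≤ ((p:ℝ)+1)/M * ∑ a, y a ^ 2 := by
      have step1 : ∀ k, k < M → (gvec M p v k ⬝ᵥ y)^2
          ≤ (∑ ld : Fin (p+1) × Fin n, Y (k + (ld.1:ℕ)) ld.2 ^ 2) / M := by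
        intro k hk
        rw [gvec_dot M p k hk v y, div_pow, Real.sq_sqrt hM0.le]
        have hYd : ∀ ld : Fin (p+1) × Fin n, Y (k + (ld.1:ℕ)) ld.2
            = y (⟨k + (ld.1:ℕ), by have := ld.1.isLt; omega⟩, ld.2) := by
          intro ld
          rw [hY]
          exact dif_pos _
        apply (div_le_div_iff_of_pos_right hM0).2
        calc (∑ ld : Fin (p+1) × Fin n,
              v ld * y (⟨k + (ld.1:ℕ), by have := ld.1.isLt; omega⟩, ld.2)) ^ 2
            ≤ (∑ ld : Fin (p+1) × Fin n, v ld ^ 2) *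
              (∑ ld : Fin (p+1) × Fin n,
                y (⟨k + (ld.1:ℕ), by have := ld.1.isLt; omega⟩, ld.2) ^ 2) :=
              Finset.sum_mul_sq_le_sq_mul_sq Finset.univ _ _
          _ ≤ 1 * (∑ ld : Fin (p+1) × Fin n,
                y (⟨k + (ld.1:ℕ), by have := ld.1.isLt; omega⟩, ld.2) ^ 2) := by
              apply mul_le_mul_of_nonneg_right hv
                (Finset.sum_nonneg fun _ _ => sq_nonneg _)
          _ = ∑ ld : Fin (p+1) × Fin n, Y (k + (ld.1:ℕ)) ld.2 ^ 2 := by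
              rw [one_mul]
              exact Finset.sum_congr rfl fun ld _ => by rw [hYd ld]
      have step2 : ∑ k ∈ Finset.range M,
          ∑ ld : Fin (p+1) × Fin n, Y (k + (ld.1:ℕ)) ld.2 ^ 2
          ≤ ((p:ℝ)+1) * ∑ a, y a ^ 2 := by
        simp_rw [Fintype.sum_prod_type]
        rw [Finset.sum_comm]
        have inner : ∀ l : Fin (p+1), ∑ k ∈ Finset.range M, ∑ d, Y (k + (l:ℕ)) d ^ 2
            ≤ ∑ j : Fin (M+p), ∑ d, y (j, d) ^ 2 := by
          intro l
          rw [Finset.sum_comm]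
          rw [Finset.sum_comm (s := Finset.univ) (γ := Fin (M+p))]
          apply Finset.sum_le_sum
          intro d _
          have hw := window_sum_le M p (fun j => Y j d ^ 2)
            (fun j => sq_nonneg _) (l:ℕ) (by have := l.isLt; omega)
          refine hw.trans_eq ?_
          rw [← Fin.sum_univ_eq_sum_range (fun j => Y j d ^ 2) (M+p)]
          apply Finset.sum_congr rfl
          intro j _
          rw [hY]
          simp only [Fin.is_lt, dif_pos, Fin.eta]
        calc ∑ l : Fin (p+1), ∑ k ∈ Finset.range M, ∑ d, Y (k + (l:ℕ)) d ^ 2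
            ≤ ∑ _l : Fin (p+1), ∑ j : Fin (M+p), ∑ d, y (j, d) ^ 2 :=
              Finset.sum_le_sum fun l _ => inner l
          _ = ((p:ℝ)+1) * ∑ j : Fin (M+p), ∑ d, y (j, d) ^ 2 := by
              rw [Finset.sum_const, Finset.card_univ, Fintype.card_fin, nsmul_eq_mul]
              push_cast
              ring
      calc ∑ k ∈ Finset.range M, (gvec M p v k ⬝ᵥ y)^2
          ≤ ∑ k ∈ Finset.range M,
            (∑ ld : Fin (p+1) × Fin n, Y (k + (ld.1:ℕ)) ld.2 ^ 2) / M :=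
            Finset.sum_le_sum fun k hk => step1 k (Finset.mem_range.1 hk)
        _ = (∑ k ∈ Finset.range M,
            ∑ ld : Fin (p+1) × Fin n, Y (k + (ld.1:ℕ)) ld.2 ^ 2) / M :=
            (Finset.sum_div _ _ _).symm
        _ ≤ (((p:ℝ)+1) * ∑ a, y a ^ 2) / M := (div_le_div_iff_of_pos_right hM0).2 step2
        _ = ((p:ℝ)+1)/M * ∑ a, y a ^ 2 := by ring
    have claimB : ∑ a, (((∑ k ∈ Finset.range M,
        (selMatrix M p n k)ᵀ * Matrix.vecMulVec v v * selMatrix M p n k) *ᵥ y) a) ^ 2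
        ≤ ((p:ℝ)+1)/M * ∑ k ∈ Finset.range M, (gvec M p v k ⬝ᵥ y)^2 := by
      have hS1 : ∀ (j : Fin (M+p)) (d : Fin n),
          ((∑ k ∈ Finset.range M,
            (selMatrix M p n k)ᵀ * Matrix.vecMulVec v v * selMatrix M p n k) *ᵥ y) (j, d)
          = ∑ k ∈ (Finset.range M).filter (fun k => k ≤ (j:ℕ) ∧ (j:ℕ) ≤ k + p),
              gvec M p v k (j, d) * (gvec M p v k ⬝ᵥ y) := by
        intro j d
        rw [hAy (j, d)]
        exact (Finset.sum_filter_of_ne fun k _ hne => by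
          by_contra hc
          exact hne (by rw [gvec_zero M p v k j d hc, zero_mul])).symm
      have hS2 : ∀ j : Fin (M+p),
          ∑ k ∈ (Finset.range M).filter (fun k => k ≤ (j:ℕ) ∧ (j:ℕ) ≤ k + p),
            ∑ d, gvec M p v k (j, d) ^ 2 ≤ 1 / M := by
        intro j
        have hterm : ∀ k ∈ (Finset.range M).filter (fun k => k ≤ (j:ℕ) ∧ (j:ℕ) ≤ k + p),
            ∑ d, gvec M p v k (j, d) ^ 2
            = (fun l : Fin (p+1) => (∑ d, v (l, d) ^ 2) / M)
                (⟨((j:ℕ) - k) % (p+1), Nat.mod_lt _ (Nat.succ_pos p)⟩) := by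
          intro k hk
          simp only [Finset.mem_filter, Finset.mem_range] at hk
          have hlt : (j:ℕ) - k < p + 1 := by omega
          have hmod : (⟨((j:ℕ) - k) % (p+1), Nat.mod_lt _ (Nat.succ_pos p)⟩ : Fin (p+1))
              = ⟨(j:ℕ) - k, hlt⟩ := Fin.ext (Nat.mod_eq_of_lt hlt)
          rw [hmod]
          simp only []
          have hd : ∀ d, gvec M p v k (j, d) ^ 2 = v (⟨(j:ℕ) - k, hlt⟩, d) ^ 2 / M := by
            intro d
            rw [gvec_mk M p v k j d (by omega) (by omega) hlt, div_pow, Real.sq_sqrt hM0.le]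
          rw [Finset.sum_congr rfl fun d _ => hd d, ← Finset.sum_div]
        rw [Finset.sum_congr rfl hterm]
        have hinj := inj_sum_le
          ((Finset.range M).filter (fun k => k ≤ (j:ℕ) ∧ (j:ℕ) ≤ k + p))
          (fun k => (⟨((j:ℕ) - k) % (p+1), Nat.mod_lt _ (Nat.succ_pos p)⟩ : Fin (p+1)))
          (by
            intro a ha b hb hab
            simp only [Finset.mem_filter, Finset.mem_range] at ha hb
            have h1 : ((j:ℕ) - a) % (p+1) = (j:ℕ) - a := Nat.mod_eq_of_lt (by omega)
            have h2 : ((j:ℕ) - b) % (p+1) = (j:ℕ) - b := Nat.mod_eq_of_lt (by omega)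
            have h3 := congrArg Fin.val hab
            simp only [Fin.val_mk] at h3
            rw [h1, h2] at h3
            omega)
          (fun l => (∑ d, v (l, d) ^ 2) / M)
          (fun l => by positivity)
        refine hinj.trans ?_
        rw [← Finset.sum_div]
        apply (div_le_div_iff_of_pos_right hM0).2
        calc ∑ l : Fin (p+1), ∑ d, v (l, d) ^ 2
            = ∑ i : Fin (p+1) × Fin n, (v i) ^ 2 :=
              (Fintype.sum_prod_type (f := fun i : Fin (p+1) × Fin n => v i ^ 2)).symm
          _ ≤ 1 := hv
      -- combine over d and j
      have hjd : ∀ j : Fin (M+p), ∑ d, (((∑ k ∈ Finset.range M,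
          (selMatrix M p n k)ᵀ * Matrix.vecMulVec v v * selMatrix M p n k) *ᵥ y) (j, d)) ^ 2
          ≤ (1/M) * ∑ k ∈ (Finset.range M).filter (fun k => k ≤ (j:ℕ) ∧ (j:ℕ) ≤ k + p),
              (gvec M p v k ⬝ᵥ y)^2 := by
        intro j
        set S := (Finset.range M).filter (fun k => k ≤ (j:ℕ) ∧ (j:ℕ) ≤ k + p) with hS
        have hC0 : (0:ℝ) ≤ ∑ k ∈ S, (gvec M p v k ⬝ᵥ y)^2 :=
          Finset.sum_nonneg fun _ _ => sq_nonneg _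
        calc ∑ d, (((∑ k ∈ Finset.range M,
              (selMatrix M p n k)ᵀ * Matrix.vecMulVec v v * selMatrix M p n k) *ᵥ y) (j, d)) ^ 2
            ≤ ∑ d, (∑ k ∈ S, gvec M p v k (j, d) ^ 2) * (∑ k ∈ S, (gvec M p v k ⬝ᵥ y)^2) := by
              apply Finset.sum_le_sum
              intro d _
              rw [hS1 j d]
              exact Finset.sum_mul_sq_le_sq_mul_sq S _ _
          _ = (∑ k ∈ S, ∑ d, gvec M p v k (j, d) ^ 2) * (∑ k ∈ S, (gvec M p v k ⬝ᵥ y)^2) := by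
              rw [← Finset.sum_mul, Finset.sum_comm]
          _ ≤ (1/M) * ∑ k ∈ S, (gvec M p v k ⬝ᵥ y)^2 :=
              mul_le_mul_of_nonneg_right (hS2 j) hC0
      have hcount : ∑ j : Fin (M+p),
          ∑ k ∈ (Finset.range M).filter (fun k => k ≤ (j:ℕ) ∧ (j:ℕ) ≤ k + p),
            (gvec M p v k ⬝ᵥ y)^2
          ≤ ((p:ℝ)+1) * ∑ k ∈ Finset.range M, (gvec M p v k ⬝ᵥ y)^2 := by
        have h1 : ∀ j : Fin (M+p),
            ∑ k ∈ (Finset.range M).filter (fun k => k ≤ (j:ℕ) ∧ (j:ℕ) ≤ k + p),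
              (gvec M p v k ⬝ᵥ y)^2
            = ∑ k ∈ Finset.range M,
                if k ≤ (j:ℕ) ∧ (j:ℕ) ≤ k + p then (gvec M p v k ⬝ᵥ y)^2 else 0 :=
          fun j => Finset.sum_filter _ _
        rw [Finset.sum_congr rfl fun j _ => h1 j, Finset.sum_comm]
        have perk : ∀ k ∈ Finset.range M, ∑ j : Fin (M+p),
            (if k ≤ (j:ℕ) ∧ (j:ℕ) ≤ k + p then (gvec M p v k ⬝ᵥ y)^2 else 0)
            ≤ ((p:ℝ)+1) * (gvec M p v k ⬝ᵥ y)^2 := by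
          intro k _
          have h2 : ∑ j : Fin (M+p),
              (if k ≤ (j:ℕ) ∧ (j:ℕ) ≤ k + p then (gvec M p v k ⬝ᵥ y)^2 else 0)
              = (Finset.univ.filter (fun j : Fin (M+p) => k ≤ (j:ℕ) ∧ (j:ℕ) ≤ k + p)).card
                  * (gvec M p v k ⬝ᵥ y)^2 := by
            rw [← Finset.sum_filter, Finset.sum_const, nsmul_eq_mul]
          rw [h2]
          apply mul_le_mul_of_nonneg_right _ (sq_nonneg _)
          have hcard : (Finset.univ.filter
              (fun j : Fin (M+p) => k ≤ (j:ℕ) ∧ (j:ℕ) ≤ k + p)).card ≤ p + 1 := by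
            have := Finset.card_le_card_of_injOn (fun j : Fin (M+p) => (j:ℕ) - k)
              (s := Finset.univ.filter (fun j : Fin (M+p) => k ≤ (j:ℕ) ∧ (j:ℕ) ≤ k + p))
              (t := Finset.range (p+1))
              (by
                intro j hj
                simp only [Finset.mem_coe, Finset.mem_filter, Finset.mem_univ, true_and] at hj
                simp only [Finset.mem_coe, Finset.mem_range]
                omega)
              (by
                intro a ha b hb hab
                simp only [Finset.coe_filter, Set.mem_setOf_eq, Finset.mem_univ,
                  true_and] at ha hb
                have hab' : (a:ℕ) - k = (b:ℕ) - k := hab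
                exact Fin.ext (by omega))
            simpa using this
          have : ((Finset.univ.filter
              (fun j : Fin (M+p) => k ≤ (j:ℕ) ∧ (j:ℕ) ≤ k + p)).card : ℝ) ≤ (p:ℝ)+1 := by
            exact_mod_cast hcard
          exact this
        calc ∑ k ∈ Finset.range M, ∑ j : Fin (M+p),
              (if k ≤ (j:ℕ) ∧ (j:ℕ) ≤ k + p then (gvec M p v k ⬝ᵥ y)^2 else 0)
            ≤ ∑ k ∈ Finset.range M, ((p:ℝ)+1) * (gvec M p v k ⬝ᵥ y)^2 :=
              Finset.sum_le_sum perk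
          _ = ((p:ℝ)+1) * ∑ k ∈ Finset.range M, (gvec M p v k ⬝ᵥ y)^2 :=
              (Finset.mul_sum _ _ _).symm
      calc ∑ a, (((∑ k ∈ Finset.range M,
            (selMatrix M p n k)ᵀ * Matrix.vecMulVec v v * selMatrix M p n k) *ᵥ y) a) ^ 2
          = ∑ j : Fin (M+p), ∑ d, (((∑ k ∈ Finset.range M,
              (selMatrix M p n k)ᵀ * Matrix.vecMulVec v v * selMatrix M p n k) *ᵥ y) (j, d)) ^ 2 :=
            Fintype.sum_prod_type _
        _ ≤ ∑ j : Fin (M+p), (1/(M:ℝ)) * ∑ k ∈ (Finset.range M).filter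
              (fun k => k ≤ (j:ℕ) ∧ (j:ℕ) ≤ k + p), (gvec M p v k ⬝ᵥ y)^2 :=
            Finset.sum_le_sum fun j _ => hjd j
        _ = (1/(M:ℝ)) * ∑ j : Fin (M+p), ∑ k ∈ (Finset.range M).filter
              (fun k => k ≤ (j:ℕ) ∧ (j:ℕ) ≤ k + p), (gvec M p v k ⬝ᵥ y)^2 :=
            (Finset.mul_sum _ _ _).symm
        _ ≤ (1/(M:ℝ)) * (((p:ℝ)+1) * ∑ k ∈ Finset.range M, (gvec M p v k ⬝ᵥ y)^2) :=
            mul_le_mul_of_nonneg_left hcount (by positivity)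
        _ = ((p:ℝ)+1)/M * ∑ k ∈ Finset.range M, (gvec M p v k ⬝ᵥ y)^2 := by ring
    -- finish
    have final : ∑ a, (((∑ k ∈ Finset.range M,
        (selMatrix M p n k)ᵀ * Matrix.vecMulVec v v * selMatrix M p n k) *ᵥ y) a) ^ 2
        ≤ (((p:ℝ)+1)/M)^2 * ∑ a, y a ^ 2 := by
      refine claimB.trans ?_
      calc ((p:ℝ)+1)/M * ∑ k ∈ Finset.range M, (gvec M p v k ⬝ᵥ y)^2
          ≤ ((p:ℝ)+1)/M * (((p:ℝ)+1)/M * ∑ a, y a ^ 2) :=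
            mul_le_mul_of_nonneg_left claimA (by positivity)
        _ = (((p:ℝ)+1)/M)^2 * ∑ a, y a ^ 2 := by ring
    calc Real.sqrt (∑ a, (((∑ k ∈ Finset.range M,
          (selMatrix M p n k)ᵀ * Matrix.vecMulVec v v * selMatrix M p n k) *ᵥ y) a) ^ 2)
        ≤ Real.sqrt ((((p:ℝ)+1)/M)^2 * ∑ a, y a ^ 2) := Real.sqrt_le_sqrt final
      _ = ((p:ℝ)+1)/M * Real.sqrt (∑ a, y a ^ 2) := by
          rw [Real.sqrt_mul (sq_nonneg _), Real.sqrt_sq (by positivity)]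
      _ = ((p:ℝ)+1)/M * Real.sqrt (∑ a, x a ^ 2) := rfl
end
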